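/- Let ℛ(λ) = 𝒞(λ I_n − 𝒜)⁻¹ ℬ be a realization of a rational matrix function, and suppose 𝒳 = 𝒳* is an invertible solution of the Riccati equation i(𝒳𝒜 − 𝒜*𝒳) = 𝒞*𝒞 + 𝒳ℬℬ*𝒳. Then the matrices A = 𝒜 + iℬℬ*𝒳, S₀ = 𝒳⁻¹, Φ₁ = ℬ, Φ₂ = −i S₀ 𝒞* satisfy the identity A S₀ − S₀ A* = i (Φ₁ Φ₁* − Φ₂ Φ₂*) = i [Φ₁ Φ₂] j [Φ₁ Φ₂]*, where j = diag(I_{p₁}, −I_{p₂}). -/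

import Mathlib

open Matrix

/-- From a Hermitian invertible solution 𝒳 of the Riccati equation
i(𝒳𝒜 − 𝒜*𝒳) = 𝒞*𝒞 + 𝒳ℬℬ*𝒳, the matrices A = 𝒜 + iℬℬ*𝒳, S₀ = 𝒳⁻¹,
Φ₁ = ℬ, Φ₂ = −i S₀ 𝒞* satisfy A S₀ − S₀ A* = i(Φ₁Φ₁* − Φ₂Φ₂*) = i [Φ₁ Φ₂] j [Φ₁ Φ₂]*. -/
theorem stmt_17 {n p₁ p₂ : ℕ}
    (𝒜 X : Matrix (Fin n) (Fin n) ℂ)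
    (ℬ : Matrix (Fin n) (Fin p₁) ℂ) (𝒞 : Matrix (Fin p₂) (Fin n) ℂ)
    (hX : X.IsHermitian) (hXu : IsUnit X.det)
    (hric : Complex.I • (X * 𝒜 - 𝒜ᴴ * X) = 𝒞ᴴ * 𝒞 + X * (ℬ * ℬᴴ) * X)
    (A : Matrix (Fin n) (Fin n) ℂ) (hA : A = 𝒜 + Complex.I • (ℬ * ℬᴴ * X))
    (Φ₂ : Matrix (Fin n) (Fin p₂) ℂ) (hΦ₂ : Φ₂ = (-Complex.I) • (X⁻¹ * 𝒞ᴴ)) :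
    A * X⁻¹ - X⁻¹ * Aᴴ = Complex.I • (ℬ * ℬᴴ - Φ₂ * Φ₂ᴴ)
    ∧ A * X⁻¹ - X⁻¹ * Aᴴ
      = Complex.I • (fromCols ℬ Φ₂ * (fromBlocks 1 0 0 (-1) : Matrix (Fin p₁ ⊕ Fin p₂) (Fin p₁ ⊕ Fin p₂) ℂ) * (fromCols ℬ Φ₂)ᴴ) := by
  have h1 : X * X⁻¹ = 1 := mul_nonsing_inv X hXu
  have h2 : X⁻¹ * X = 1 := nonsing_inv_mul X hXu
  have hXi : X⁻¹ᴴ = X⁻¹ := by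
    rw [conjTranspose_nonsing_inv, hX.eq]
  have hΦΦ : Φ₂ * Φ₂ᴴ = X⁻¹ * (𝒞ᴴ * (𝒞 * X⁻¹)) := by
    subst hΦ₂
    simp [conjTranspose_smul, Matrix.smul_mul, Matrix.mul_smul, smul_smul,
      Complex.I_mul_I, hXi, Matrix.mul_assoc]
  have h := congrArg (fun M => (-Complex.I) • (X⁻¹ * M * X⁻¹)) hric
  simp only [Matrix.mul_sub, Matrix.sub_mul, Matrix.mul_add, Matrix.add_mul,
    Matrix.mul_smul, Matrix.smul_mul, smul_smul, neg_mul, Complex.I_mul_I, neg_neg,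
    one_smul, Matrix.mul_assoc, nonsing_inv_mul_cancel_left _ _ hXu, h1,
    Matrix.mul_one] at h
  -- h : 𝒜 * X⁻¹ - X⁻¹ * 𝒜ᴴ = -Complex.I • (...)
  rw [sub_eq_iff_eq_add] at h
  have first : A * X⁻¹ - X⁻¹ * Aᴴ = Complex.I • (ℬ * ℬᴴ - Φ₂ * Φ₂ᴴ) := by
    subst hA
    rw [hΦΦ]
    simp only [conjTranspose_add, conjTranspose_smul, Complex.star_def,
      Complex.conj_I, conjTranspose_mul, hX.eq, conjTranspose_conjTranspose,
      Matrix.add_mul, Matrix.mul_add, Matrix.smul_mul, Matrix.mul_smul, neg_smul, Matrix.mul_neg, Matrix.neg_mul,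
      Matrix.mul_assoc, h1, Matrix.mul_one, nonsing_inv_mul_cancel_left _ _ hXu]
    rw [h]
    module
  refine ⟨first, ?_⟩
  rw [first, fromCols_mul_fromBlocks,
    conjTranspose_fromCols_eq_fromRows_conjTranspose, fromCols_mul_fromRows]
  simp [Matrix.mul_sub, sub_eq_add_neg]
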